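/- Let n = 2^m with m ≥ 4 and let i be even with 3 ≤ i ≤ n/4 - 1. Then with B_i = C(n,2i) + (-1)^i (n-1) C(n/2, i), we have B_i^2 / (B_{i-1} B_{i+1}) ≥ C(n,2i)^2 / (C(n,2i-2)·C(n,2i+2)) ≥ 1. -/

import Mathlib

lemma vand (k j : ℕ) : k.choose j * k.choose j ≤ (k + k).choose (2 * j) := by
  rw [Nat.add_choose_eq]
  have hmem : ((j, j) : ℕ × ℕ) ∈ Finset.HasAntidiagonal.antidiagonal (2 * j) := by
    simp [two_mul]
  exact Finset.single_le_sum (f := fun ij : ℕ × ℕ => k.choose ij.1 * k.choose ij.2)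
    (fun _ _ => Nat.zero_le _) hmem

lemma choose_mono_left {n a : ℕ} : ∀ {b : ℕ}, a ≤ b → b ≤ n / 2 → n.choose a ≤ n.choose b := by
  intro b
  induction b with
  | zero => intro h _; rw [Nat.le_zero.mp h]
  | succ b ih =>
    intro hab hb
    rcases Nat.eq_or_lt_of_le hab with rfl | h
    · exact le_rfl
    · exact (ih (by omega) (by omega)).trans (Nat.choose_le_succ_of_lt_half_left (by omega))

lemma key_lt {m j : ℕ} (hm : 4 ≤ m) (h2 : 2 ≤ j) (hj : j ≤ 2 ^ (m - 2)) :
    (2 ^ m - 1) * (2 ^ (m - 1)).choose j < (2 ^ m).choose (2 * j) := by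
  have e1 : 2 ^ (m - 1) = 2 * 2 ^ (m - 2) := by
    rw [← pow_succ']; congr 1; omega
  have e2 : 2 ^ m = 2 * 2 ^ (m - 1) := by
    rw [← pow_succ']; congr 1; omega
  have ht : 4 ≤ 2 ^ (m - 2) := by
    calc 4 = 2 ^ 2 := by norm_num
    _ ≤ 2 ^ (m - 2) := Nat.pow_le_pow_right (by norm_num) (by omega)
  have h2p : 2 ^ m ≤ (2 ^ (m - 1)).choose 2 := by
    rw [Nat.choose_two_right, Nat.le_div_iff_mul_le (by norm_num)]
    have h8 : 8 ≤ 2 ^ (m - 1) := by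
      calc (8:ℕ) = 2 ^ 3 := by norm_num
      _ ≤ 2 ^ (m - 1) := Nat.pow_le_pow_right (by norm_num) (by omega)
    calc 2 ^ m * 2 = 2 ^ (m - 1) * 4 := by rw [e2]; ring
    _ ≤ 2 ^ (m - 1) * (2 ^ (m - 1) - 1) := Nat.mul_le_mul_left _ (by omega)
  have hhalf : 2 ^ (m - 1) / 2 = 2 ^ (m - 2) := by omega
  have hp : 2 ^ m ≤ (2 ^ (m - 1)).choose j :=
    h2p.trans (choose_mono_left h2 (by omega))
  calc (2 ^ m - 1) * (2 ^ (m - 1)).choose j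
      < (2 ^ (m - 1)).choose j * (2 ^ (m - 1)).choose j := by
        have hpos : 0 < (2 ^ (m - 1)).choose j := Nat.choose_pos (by omega)
        exact mul_lt_mul_of_pos_right (by omega) hpos
    _ ≤ (2 ^ (m - 1) + 2 ^ (m - 1)).choose (2 * j) := vand _ _
    _ = (2 ^ m).choose (2 * j) := by rw [← two_mul, ← e2]

lemma logconcave {n u : ℕ} (h : u + 4 ≤ n) :
    (n.choose u : ℚ) * (n.choose (u + 4) : ℚ) ≤ (n.choose (u + 2) : ℚ) ^ 2 := by
  have step : ∀ k : ℕ, k < n →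
      (n.choose (k + 1) : ℚ) * ((k : ℚ) + 1) = (n.choose k : ℚ) * ((n : ℚ) - k) := by
    intro k hk
    have h1 := congrArg (fun t : ℕ => (t : ℚ)) (Nat.choose_succ_right_eq n k)
    push_cast [Nat.cast_sub hk.le] at h1
    linarith [h1]
  have ha : (0 : ℚ) < (n.choose u : ℚ) := by exact_mod_cast Nat.choose_pos (by omega)
  have hb : (0 : ℚ) < (n.choose (u + 2) : ℚ) := by exact_mod_cast Nat.choose_pos (by omega)
  set a : ℚ := (n.choose u : ℚ) with ha'
  set d1 : ℚ := (n.choose (u + 1) : ℚ)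
  set b : ℚ := (n.choose (u + 2) : ℚ)
  set d2 : ℚ := (n.choose (u + 3) : ℚ)
  set c : ℚ := (n.choose (u + 4) : ℚ)
  have e0 := step u (by omega)
  have e1 := step (u + 1) (by omega)
  have e2 := step (u + 2) (by omega)
  have e3 := step (u + 3) (by omega)
  push_cast at e0 e1 e2 e3
  set x : ℚ := (n : ℚ) - u with hx'
  have hx4 : (4 : ℚ) ≤ x := by
    have : ((u : ℚ) + 4) ≤ (n : ℚ) := by exact_mod_cast h
    simp [hx']; linarith
  have hu0 : (0 : ℚ) ≤ (u : ℚ) := Nat.cast_nonneg u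
  have EA : b * ((u : ℚ) + 1) * ((u : ℚ) + 2) = a * x * (x - 1) := by
    simp only [hx']
    linear_combination ((u : ℚ) + 1) * e1 + ((n : ℚ) - (u : ℚ) - 1) * e0
  have EB : c * ((u : ℚ) + 3) * ((u : ℚ) + 4) = b * (x - 2) * (x - 3) := by
    simp only [hx']
    linear_combination ((u : ℚ) + 3) * e3 + ((n : ℚ) - (u : ℚ) - 3) * e2
  have f1 : (x - 2) * (x - 3) ≤ x * (x - 1) := by nlinarith
  have f2 : ((u : ℚ) + 1) * ((u : ℚ) + 2) ≤ ((u : ℚ) + 3) * ((u : ℚ) + 4) := by nlinarith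
  have hF : ((u : ℚ) + 1) * ((u : ℚ) + 2) * ((x - 2) * (x - 3))
      ≤ ((u : ℚ) + 3) * ((u : ℚ) + 4) * (x * (x - 1)) :=
    mul_le_mul f2 f1 (by nlinarith) (by positivity)
  have hab : (0 : ℚ) ≤ a * b := mul_nonneg ha.le hb.le
  have hthis : a * b * (((u : ℚ) + 1) * ((u : ℚ) + 2) * ((x - 2) * (x - 3)))
      ≤ a * b * (((u : ℚ) + 3) * ((u : ℚ) + 4) * (x * (x - 1))) :=
    mul_le_mul_of_nonneg_left hF hab
  have hP : (0 : ℚ) < ((u : ℚ) + 1) * ((u : ℚ) + 2) * (((u : ℚ) + 3) * ((u : ℚ) + 4)) := by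
    positivity
  rw [← mul_le_mul_iff_of_pos_right hP]
  have hEq : a * c * (((u : ℚ) + 1) * ((u : ℚ) + 2) * (((u : ℚ) + 3) * ((u : ℚ) + 4)))
      - b ^ 2 * (((u : ℚ) + 1) * ((u : ℚ) + 2) * (((u : ℚ) + 3) * ((u : ℚ) + 4)))
      = a * b * (((u : ℚ) + 1) * ((u : ℚ) + 2) * (x - 2) * (x - 3))
      - a * b * (x * (x - 1) * ((u : ℚ) + 3) * ((u : ℚ) + 4)) := by
    linear_combination (a * ((u : ℚ) + 1) * ((u : ℚ) + 2)) * EB - (b * ((u : ℚ) + 3) * ((u : ℚ) + 4)) * EA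
  linarith


/-- For `n = 2^m` with `m ≥ 4` and even `i` with `3 ≤ i ≤ n/4 - 1`:
with `B_i = C(n,2i) + (-1)^i (n-1) C(n/2,i)`,
`B_i^2/(B_{i-1}B_{i+1}) ≥ C(n,2i)^2/(C(n,2i-2)·C(n,2i+2))  ≥ 1`. -/
theorem extended_hamming_even_index_step (m i : ℕ) (hm : 4 ≤ m) (hi : Even i)
    (hi3 : 3 ≤ i) (hin : i ≤ 2 ^ m / 4 - 1) :
    let n : ℕ := 2 ^ m
    let B : ℕ → ℚ := fun j =>
      (n.choose (2 * j) : ℚ) + (-1) ^ j * ((n : ℚ) - 1) * ((n / 2).choose j : ℚ)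
    ((n.choose (2 * i) : ℚ) ^ 2 / ((n.choose (2 * i - 2) : ℚ) * (n.choose (2 * i + 2) : ℚ))
        ≤ B i ^ 2 / (B (i - 1) * B (i + 1))) ∧
    (1 ≤ (n.choose (2 * i) : ℚ) ^ 2 /
        ((n.choose (2 * i - 2) : ℚ) * (n.choose (2 * i + 2) : ℚ))) := by
  intro n B
  have hq4 : 2 ^ m / 4 = 2 ^ (m - 2) := by
    rw [show (4:ℕ) = 2 ^ 2 by norm_num, Nat.pow_div (by omega) (by norm_num)]
  have hhalf : 2 ^ m / 2 = 2 ^ (m - 1) := by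
    have h : 2 ^ m = 2 ^ (m - 1) * 2 := by rw [← pow_succ]; congr 1; omega
    rw [h, Nat.mul_div_cancel _ (by norm_num)]
  have hpe1 : 2 ^ (m - 1) = 2 * 2 ^ (m - 2) := by rw [← pow_succ']; congr 1; omega
  have hpe2 : 2 ^ m = 2 * 2 ^ (m - 1) := by rw [← pow_succ']; congr 1; omega
  have ht4 : 4 ≤ 2 ^ (m - 2) := by
    calc (4:ℕ) = 2 ^ 2 := by norm_num
    _ ≤ 2 ^ (m - 2) := Nat.pow_le_pow_right (by norm_num) (by omega)
  have hi1 : i + 1 ≤ 2 ^ (m - 2) := by omega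
  have h2i : 2 * i + 2 ≤ 2 ^ (m - 1) := by omega
  have hn : n = 2 ^ m := rfl
  have h2in : 2 * i + 2 ≤ n := by rw [hn]; omega
  have hn16 : (16:ℚ) ≤ (n:ℚ) := by
    have : (16:ℕ) ≤ n := by rw [hn]; calc (16:ℕ) = 2 ^ 4 := by norm_num
                                       _ ≤ 2 ^ m := Nat.pow_le_pow_right (by norm_num) hm
    exact_mod_cast this
  -- cast versions of the key strict inequality
  have hcast : ∀ j : ℕ, 2 ≤ j → j ≤ 2 ^ (m - 2) →
      ((n:ℚ) - 1) * ((n / 2).choose j : ℚ) < (n.choose (2 * j) : ℚ) := by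
    intro j h2 hj
    have h := key_lt hm h2 hj
    have hone : (1:ℕ) ≤ 2 ^ m := Nat.one_le_two_pow
    have hq : (((2 ^ m - 1) * (2 ^ (m - 1)).choose j : ℕ) : ℚ)
        < (((2 ^ m).choose (2 * j) : ℕ) : ℚ) := by exact_mod_cast h
    rw [hn, hhalf]
    push_cast [Nat.cast_sub hone] at hq ⊢
    exact hq
  have hBi : B i = (n.choose (2 * i) : ℚ) + ((n:ℚ) - 1) * ((n / 2).choose i : ℚ) := by
    simp only [B, hi.neg_one_pow, one_mul]
  have hoddm : Odd (i - 1) := Nat.Even.sub_odd (by omega) hi odd_one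
  have e1 : 2 * (i - 1) = 2 * i - 2 := by omega
  have hBm : B (i - 1) = (n.choose (2 * i - 2) : ℚ)
      - ((n:ℚ) - 1) * ((n / 2).choose (i - 1) : ℚ) := by
    simp only [B, hoddm.neg_one_pow, e1]; ring
  have hBp : B (i + 1) = (n.choose (2 * i + 2) : ℚ)
      - ((n:ℚ) - 1) * ((n / 2).choose (i + 1) : ℚ) := by
    have e2 : 2 * (i + 1) = 2 * i + 2 := by ring
    simp only [B, (hi.add_one).neg_one_pow, e2]; ring
  have hm1 := hcast (i - 1) (by omega) (by omega)
  rw [e1] at hm1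
  have hp1 := hcast (i + 1) (by omega) hi1
  have e3 : 2 * (i + 1) = 2 * i + 2 := by ring
  rw [e3] at hp1
  have hq0 : (0:ℚ) ≤ ((n / 2).choose i : ℚ) := Nat.cast_nonneg _
  have hqm : (0:ℚ) ≤ ((n / 2).choose (i - 1) : ℚ) := Nat.cast_nonneg _
  have hqp : (0:ℚ) ≤ ((n / 2).choose (i + 1) : ℚ) := Nat.cast_nonneg _
  have hn1 : (0:ℚ) ≤ (n:ℚ) - 1 := by linarith
  have hBb0 : (0:ℚ) < (n.choose (2 * i) : ℚ) := by
    exact_mod_cast Nat.choose_pos (show 2 * i ≤ n by omega)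
  have hA0 : (0:ℚ) < (n.choose (2 * i - 2) : ℚ) := by
    exact_mod_cast Nat.choose_pos (show 2 * i - 2 ≤ n by omega)
  have hC0 : (0:ℚ) < (n.choose (2 * i + 2) : ℚ) := by
    exact_mod_cast Nat.choose_pos (show 2 * i + 2 ≤ n by omega)
  have hBmpos : 0 < B (i - 1) := by rw [hBm]; linarith
  have hBppos : 0 < B (i + 1) := by rw [hBp]; linarith
  have hBmle : B (i - 1) ≤ (n.choose (2 * i - 2) : ℚ) := by
    rw [hBm]; linarith [mul_nonneg hn1 hqm]
  have hBple : B (i + 1) ≤ (n.choose (2 * i + 2) : ℚ) := by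
    rw [hBp]; linarith [mul_nonneg hn1 hqp]
  have hBiL : (n.choose (2 * i) : ℚ) ≤ B i := by
    rw [hBi]; linarith [mul_nonneg hn1 hq0]
  have hprodpos : 0 < B (i - 1) * B (i + 1) := mul_pos hBmpos hBppos
  have hprodle : B (i - 1) * B (i + 1)
      ≤ (n.choose (2 * i - 2) : ℚ) * (n.choose (2 * i + 2) : ℚ) :=
    mul_le_mul hBmle hBple hBppos.le hA0.le
  have hlc : (n.choose (2 * i - 2) : ℚ) * (n.choose (2 * i + 2) : ℚ)
      ≤ (n.choose (2 * i) : ℚ) ^ 2 := by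
    have h4 : (2 * i - 2) + 4 ≤ n := by omega
    have h := logconcave h4
    have e4 : 2 * i - 2 + 2 = 2 * i := by omega
    have e5 : 2 * i - 2 + 4 = 2 * i + 2 := by omega
    rwa [e4, e5] at h
  constructor
  · exact div_le_div₀ (by positivity) (pow_le_pow_left₀ hBb0.le hBiL 2) hprodpos hprodle
  · rw [one_le_div (by positivity)]
    exact hlc
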